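/- For any SPA (a VRA in which all component automata are DFAs and distinct procedural symbols have distinct call symbols under the linking function), if carcr is accepted, then carcar is accepted. Consequently, there is a deterministic VRA whose language contains carcr but not carcar and which therefore has no equivalent SPA over the same pushdown alphabet. -/
import Mathlib


/-- A symbol of a pushdown alphabet: internal, call, or return. -/
inductive VSym (I C R : Type) : Type
  | int  : I → VSym I C R
  | call : C → VSym I C R
  | ret  : R → VSym I C R

/-- The set of well-matched words over a pushdown alphabet. -/
inductive WellMatched {I C R : Type} : List (VSym I C R) → Prop
  | internal (u : List I) : WellMatched (u.map VSym.int)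
  | bracket {w : List (VSym I C R)} (c : C) (r : R) :
      WellMatched w → WellMatched (VSym.call c :: w ++ [VSym.ret r])
  | concat {w₁ w₂ : List (VSym I C R)} :
      WellMatched w₁ → WellMatched w₂ → WellMatched (w₁ ++ w₂)

def VSym.isCall {I C R : Type} : VSym I C R → Bool
  | .call _ => true
  | _ => false

def VSym.isRet {I C R : Type} : VSym I C R → Bool
  | .ret _ => true
  | _ => false

/-- The depth of a word: the maximal excess of call symbols over return symbols
in any prefix (the deepest level of unmatched calls at any point). -/
def VSym.depth {I C R : Type} (w : List (VSym I C R)) : ℕ :=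
  (w.inits.map fun p => p.countP VSym.isCall - p.countP VSym.isRet).foldr max 0

/-- A visibly recursive automaton: a family of finite automata over the internal
and procedural symbols, identified by the component map `comp` (`none` denotes the
starting automaton `A^S`, `some J` the component automaton `A^J`), together with a
linking function `link` assigning to each procedural symbol a call/return pair.
Transitions of each component automaton stay within that component. -/
structure VRA (I C R P Q : Type) where
  /-- the linking function `f : Σ_proc → Σ_call × Σ_ret` -/
  link : P → C × R
  /-- the component automaton each state belongs to (`none` = starting automaton) -/
  comp : Q → Option P
  init : Q → Prop
  final : Q → Prop
  intTrans : Q → I → Q → Prop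
  procTrans : Q → P → Q → Prop
  intTrans_comp : ∀ ⦃q a p⦄, intTrans q a p → comp p = comp q
  procTrans_comp : ∀ ⦃q J p⦄, procTrans q J p → comp p = comp q

namespace VRA

variable {I C R P Q : Type}

/-- One step of a recursive run, on configurations (state, stack of states). -/
inductive Step (A : VRA I C R P Q) : Q × List Q → VSym I C R → Q × List Q → Prop
  | int {q q' : Q} {σ : List Q} {a : I} :
      A.intTrans q a q' → Step A (q, σ) (VSym.int a) (q', σ)
  | call {q q' p : Q} {σ : List Q} {J : P} {c : C} :
      A.procTrans q J p → (A.link J).1 = c → A.comp q' = some J → A.init q' →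
      Step A (q, σ) (VSym.call c) (q', p :: σ)
  | ret {q p : Q} {σ : List Q} {J : P} {r : R} :
      A.comp q = some J → A.final q → (A.link J).2 = r →
      Step A (q, p :: σ) (VSym.ret r) (p, σ)

/-- Recursive runs of a VRA. -/
inductive Run (A : VRA I C R P Q) : Q × List Q → List (VSym I C R) → Q × List Q → Prop
  | nil (cfg : Q × List Q) : Run A cfg [] cfg
  | cons {cfg₁ cfg₂ cfg₃ : Q × List Q} {a : VSym I C R} {w : List (VSym I C R)} :
      Step A cfg₁ a cfg₂ → Run A cfg₂ w cfg₃ → Run A cfg₁ (a :: w) cfg₃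

/-- The recursive language of the component automaton `A^J` (`J = none` is the
starting automaton): words with a recursive run from an initial state of the
component with empty stack to a final state of the component with empty stack. -/
def RecLang (A : VRA I C R P Q) (J : Option P) : Set (List (VSym I C R)) :=
  {w | ∃ qi qf, A.comp qi = J ∧ A.init qi ∧ A.comp qf = J ∧ A.final qf ∧
    Run A (qi, []) w (qf, [])}

/-- The language of a VRA: the recursive language of its starting automaton. -/
def Lang (A : VRA I C R P Q) : Set (List (VSym I C R)) := A.RecLang none

/-- Regular runs: runs of the component automata viewed as ordinary finite
automata over the alphabet `Σ_int ∪ Σ_proc`. -/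
inductive RegRun (A : VRA I C R P Q) : Q → List (I ⊕ P) → Q → Prop
  | nil (q : Q) : RegRun A q [] q
  | int {q q' p : Q} {a : I} {w : List (I ⊕ P)} :
      A.intTrans q a q' → RegRun A q' w p → RegRun A q (Sum.inl a :: w) p
  | proc {q q' p : Q} {J : P} {w : List (I ⊕ P)} :
      A.procTrans q J q' → RegRun A q' w p → RegRun A q (Sum.inr J :: w) p

/-- The regular language of the component automaton `A^J`, over `Σ_int ∪ Σ_proc`. -/
def RegLang (A : VRA I C R P Q) (J : Option P) : Set (List (I ⊕ P)) :=
  {w | ∃ qi qf, A.comp qi = J ∧ A.init qi ∧ A.comp qf = J ∧ A.final qf ∧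
    RegRun A qi w qf}

/-- A VRA is codeterministic if component automata linked to the same call/return
pair have pairwise disjoint recursive languages. -/
def Codeterministic (A : VRA I C R P Q) : Prop :=
  ∀ J J' : P, J ≠ J' → A.link J = A.link J' →
    A.RecLang (some J) ∩ A.RecLang (some J') = ∅

/-- A VRA is complete if every state has an outgoing transition on every symbol of
`Σ_int ∪ Σ_proc`, and for every call/return pair the recursive languages of the
linked component automata cover all well-matched words. -/
def Complete (A : VRA I C R P Q) : Prop :=
  (∀ (q : Q) (a : I), ∃ p, A.intTrans q a p) ∧
  (∀ (q : Q) (J : P), ∃ p, A.procTrans q J p) ∧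
  (∀ (c : C) (r : R),
    (⋃ J ∈ {J : P | A.link J = (c, r)}, A.RecLang (some J)) = {w | WellMatched w})

/-- A VRA is deterministic if every component automaton (including the starting
one) has a unique initial state and deterministic transitions, and procedural
transitions from a common state on procedural symbols with the same call symbol
agree on the procedural symbol. -/
def Deterministic (A : VRA I C R P Q) : Prop :=
  (∀ J : Option P, ∃! q, A.comp q = J ∧ A.init q) ∧
  (∀ q a p p', A.intTrans q a p → A.intTrans q a p' → p = p') ∧
  (∀ q J p p', A.procTrans q J p → A.procTrans q J p' → p = p') ∧
  (∀ q J J' p p', A.procTrans q J p → A.procTrans q J' p' →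
    (A.link J).1 = (A.link J').1 → J = J')

/-- All component automata of the VRA are complete DFAs: a unique initial state in
each component and exactly one outgoing transition per state and symbol. -/
def AllCompleteDFA (A : VRA I C R P Q) : Prop :=
  (∀ J : Option P, ∃! q, A.comp q = J ∧ A.init q) ∧
  (∀ (q : Q) (a : I), ∃! p, A.intTrans q a p) ∧
  (∀ (q : Q) (J : P), ∃! p, A.procTrans q J p)

/-- The size of a VRA: number of states plus number of transitions. -/
noncomputable def size (A : VRA I C R P Q) : ℕ :=
  Nat.card Q + Nat.card {t : Q × I × Q // A.intTrans t.1 t.2.1 t.2.2}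
    + Nat.card {t : Q × P × Q // A.procTrans t.1 t.2.1 t.2.2}

end VRA

/-- A system of procedural automata (SPA): a deterministic VRA in which distinct
procedural symbols have distinct call symbols under the linking function. -/
def VRA.IsSPA {I C R P Q : Type} (A : VRA I C R P Q) : Prop :=
  A.Deterministic ∧ ∀ J J' : P, J ≠ J' → (A.link J).1 ≠ (A.link J').1

abbrev sa' : VSym Unit Unit Unit := VSym.int ()
abbrev sc' : VSym Unit Unit Unit := VSym.call ()
abbrev sr' : VSym Unit Unit Unit := VSym.ret ()


/-- State type for the counterexample VRA. -/
inductive MS : Type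
  | q0 | q1 | q2 | u0 | u1 | v0
deriving DecidableEq

/-- The counterexample deterministic VRA: main automaton `q0 -J₁-> q1 -J₂-> q2`,
component `J₁ = false` accepts `a`, component `J₂ = true` accepts `ε`. -/
def BB : VRA Unit Unit Unit Bool MS where
  link _ := ((), ())
  comp q := match q with
    | .q0 | .q1 | .q2 => none
    | .u0 | .u1 => some false
    | .v0 => some true
  init q := q = .q0 ∨ q = .u0 ∨ q = .v0
  final q := q = .q2 ∨ q = .u1 ∨ q = .v0
  intTrans q _ p := q = .u0 ∧ p = .u1
  procTrans q J p := (q = .q0 ∧ J = false ∧ p = .q1) ∨ (q = .q1 ∧ J = true ∧ p = .q2)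
  intTrans_comp := by rintro q a p ⟨rfl, rfl⟩; rfl
  procTrans_comp := by rintro q J p (⟨rfl, _, rfl⟩ | ⟨rfl, _, rfl⟩) <;> rfl

section Inversion

variable {I C R P Q : Type} {A : VRA I C R P Q}

lemma run_cons_inv {cfg cfg' : Q × List Q} {x : VSym I C R} {w : List (VSym I C R)}
    (h : A.Run cfg (x :: w) cfg') : ∃ cfg₂, A.Step cfg x cfg₂ ∧ A.Run cfg₂ w cfg' := by
  cases h with | cons st r => exact ⟨_, st, r⟩

lemma run_nil_inv {cfg cfg' : Q × List Q} (h : A.Run cfg [] cfg') : cfg' = cfg := by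
  cases h; rfl

lemma step_int_inv {q q' : Q} {σ σ' : List Q} {a : I}
    (h : A.Step (q, σ) (VSym.int a) (q', σ')) : A.intTrans q a q' ∧ σ' = σ := by
  cases h with | int ht => exact ⟨ht, rfl⟩

lemma step_call_inv {q q' : Q} {σ σ' : List Q} {c : C}
    (h : A.Step (q, σ) (VSym.call c) (q', σ')) :
    ∃ J p, A.procTrans q J p ∧ (A.link J).1 = c ∧ A.comp q' = some J ∧ A.init q' ∧
      σ' = p :: σ := by
  cases h with | call ht hl hc hi => exact ⟨_, _, ht, hl, hc, hi, rfl⟩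

lemma step_ret_inv {q q' : Q} {σ σ' : List Q} {r : R}
    (h : A.Step (q, σ) (VSym.ret r) (q', σ')) :
    ∃ J, A.comp q = some J ∧ A.final q ∧ (A.link J).2 = r ∧ σ = q' :: σ' := by
  cases h with | ret hc hf hl => exact ⟨_, hc, hf, hl, rfl⟩

end Inversion

/-- every SPA accepting `carcr` also accepts `carcar`; consequently
there is a deterministic VRA (accepting `carcr` but not `carcar`) that has no
equivalent SPA over the same pushdown alphabet. -/
theorem spa_strictly_weaker :
    (∀ (P Q : Type) (A : VRA Unit Unit Unit P Q), A.IsSPA →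
      [sc', sa', sr', sc', sr'] ∈ A.Lang → [sc', sa', sr', sc', sa', sr'] ∈ A.Lang) ∧
    (∃ (P Q : Type) (B : VRA Unit Unit Unit P Q), B.Deterministic ∧
      [sc', sa', sr', sc', sr'] ∈ B.Lang ∧ [sc', sa', sr', sc', sa', sr'] ∉ B.Lang) := by
  constructor
  · rintro P Q A ⟨hDet, hInj⟩ ⟨qi, qf, hci, hii, hcf, hif, hrun⟩
    obtain ⟨⟨s1, σ1⟩, st1, r1⟩ := run_cons_inv hrun
    obtain ⟨J, p, ht1, hl1, hc1, hi1, rfl⟩ := step_call_inv st1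
    obtain ⟨⟨s2, σ2⟩, st2, r2⟩ := run_cons_inv r1
    obtain ⟨ht2, rfl⟩ := step_int_inv st2
    obtain ⟨⟨s2', σ3⟩, st3, r3⟩ := run_cons_inv r2
    obtain ⟨J', hc2, hf2, hl2, heq⟩ := step_ret_inv st3
    obtain ⟨rfl, rfl⟩ : s2' = p ∧ σ3 = [] := by
      injection heq with h1 h2; exact ⟨h1.symm, h2.symm⟩
    obtain ⟨⟨s3, σ4⟩, st4, r4⟩ := run_cons_inv r3
    obtain ⟨J2, p2, ht4, hl4, hc4, hi4, rfl⟩ := step_call_inv st4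
    obtain ⟨⟨s4, σ5⟩, st5, r5⟩ := run_cons_inv r4
    obtain ⟨J3, hc5, hf5, hl5, heq5⟩ := step_ret_inv st5
    obtain ⟨rfl, rfl⟩ : s4 = p2 ∧ σ5 = [] := by
      injection heq5 with h1 h2; exact ⟨h1.symm, h2.symm⟩
    have hqf := run_nil_inv r5
    obtain ⟨rfl, -⟩ : qf = s4 ∧ ([] : List Q) = [] := by
      rw [Prod.ext_iff] at hqf; exact ⟨hqf.1, rfl⟩
    -- all call symbols coincide, so J2 = J
    have hJ : J2 = J := by
      by_contra h
      exact hInj J2 J h (Subsingleton.elim _ _)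
    subst hJ
    -- unique initial state of component J : s3 = s1
    obtain ⟨u, -, huniq⟩ := hDet.1 (some J2)
    have hs : s3 = s1 := (huniq s3 ⟨hc4, hi4⟩).trans (huniq s1 ⟨hc1, hi1⟩).symm
    subst hs
    refine ⟨qi, qf, hci, hii, hcf, hif, ?_⟩
    exact .cons (.call ht1 (Subsingleton.elim _ _) hc1 hi1)
      (.cons (.int ht2)
      (.cons (.ret hc2 hf2 (Subsingleton.elim _ _))
      (.cons (.call ht4 (Subsingleton.elim _ _) hc1 hi1)
      (.cons (.int ht2)
      (.cons (.ret hc2 hf2 (Subsingleton.elim _ _)) (.nil _))))))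
  · refine ⟨Bool, MS, BB, ?_, ?_, ?_⟩
    · refine ⟨?_, ?_, ?_, ?_⟩
      · rintro (_ | (_ | _))
        · exact ⟨.q0, ⟨rfl, Or.inl rfl⟩, by
            rintro q ⟨hc, (rfl | rfl | rfl)⟩ <;> first | rfl | simp [BB] at hc⟩
        · exact ⟨.u0, ⟨rfl, Or.inr (Or.inl rfl)⟩, by
            rintro q ⟨hc, (rfl | rfl | rfl)⟩ <;> first | rfl | simp [BB] at hc⟩
        · exact ⟨.v0, ⟨rfl, Or.inr (Or.inr rfl)⟩, by
            rintro q ⟨hc, (rfl | rfl | rfl)⟩ <;> first | rfl | simp [BB] at hc⟩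
      · rintro q a p p' ⟨rfl, rfl⟩ ⟨-, rfl⟩; rfl
      · rintro q J p p' (⟨rfl, rfl, rfl⟩ | ⟨rfl, rfl, rfl⟩)
          (⟨h, -, rfl⟩ | ⟨h, -, rfl⟩) <;> first | rfl | exact absurd h (by simp)
      · rintro q J J' p p' (⟨rfl, rfl, rfl⟩ | ⟨rfl, rfl, rfl⟩)
          (⟨h, rfl, rfl⟩ | ⟨h, rfl, rfl⟩) _ <;> first | rfl | exact absurd h (by simp)
    · refine ⟨.q0, .q2, rfl, Or.inl rfl, rfl, Or.inl rfl, ?_⟩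
      exact .cons (.call (Or.inl ⟨rfl, rfl, rfl⟩) rfl
          (rfl : BB.comp MS.u0 = some false) (Or.inr (Or.inl rfl)))
        (.cons (.int (⟨rfl, rfl⟩ : MS.u0 = MS.u0 ∧ MS.u1 = MS.u1))
        (.cons (.ret (rfl : BB.comp MS.u1 = some false) (Or.inr (Or.inl rfl)) rfl)
        (.cons (.call (Or.inr ⟨rfl, rfl, rfl⟩) rfl
          (rfl : BB.comp MS.v0 = some true) (Or.inr (Or.inr rfl)))
        (.cons (.ret (rfl : BB.comp MS.v0 = some true) (Or.inr (Or.inr rfl)) rfl) (.nil _)))))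
    · rintro ⟨qi, qf, hci, hii, hcf, hif, hrun⟩
      have hq : qi = .q0 := by
        rcases hii with rfl | rfl | rfl <;> first | rfl | simp [BB] at hci
      subst hq
      obtain ⟨⟨s1, σ1⟩, st1, r1⟩ := run_cons_inv hrun
      obtain ⟨J, p, ht1, -, hc1, hi1, rfl⟩ := step_call_inv st1
      rcases ht1 with ⟨-, rfl, rfl⟩ | ⟨h, -, -⟩
      · have hs1 : s1 = .u0 := by
          rcases hi1 with rfl | rfl | rfl <;> first | rfl | simp [BB] at hc1
        subst hs1
        obtain ⟨⟨s2, σ2⟩, st2, r2⟩ := run_cons_inv r1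
        obtain ⟨⟨-, rfl⟩, rfl⟩ := step_int_inv st2
        obtain ⟨⟨s3, σ3⟩, st3, r3⟩ := run_cons_inv r2
        obtain ⟨J', -, -, -, heq⟩ := step_ret_inv st3
        obtain ⟨rfl, rfl⟩ : s3 = MS.q1 ∧ σ3 = [] := by
          injection heq with h1 h2; exact ⟨h1.symm, h2.symm⟩
        obtain ⟨⟨s4, σ4⟩, st4, r4⟩ := run_cons_inv r3
        obtain ⟨J2, p2, ht4, -, hc4, hi4, rfl⟩ := step_call_inv st4
        rcases ht4 with ⟨h, -, -⟩ | ⟨-, rfl, rfl⟩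
        · exact absurd h (by simp)
        · have hs4 : s4 = .v0 := by
            rcases hi4 with rfl | rfl | rfl <;> first | rfl | simp [BB] at hc4
          subst hs4
          obtain ⟨⟨s5, σ5⟩, st5, r5⟩ := run_cons_inv r4
          obtain ⟨⟨h, -⟩, -⟩ := step_int_inv st5
          exact absurd h (by simp)
      · exact absurd h (by simp)
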